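/- Let A ⊆ ℤ × ℤ be a finite connected set of grid cells, B ⊆ A, and suppose S* ⊆ A is a connected partition of A in the +y direction (i.e., S* and A \ S* both induce connected subgraphs of the grid adjacency graph, and no cell of A \ S* lies in the same column strictly above a cell of S*). If B ⊆ S* and the induced subgraph on A \ B is disconnected with connected components T₁, …, T_r (r ≥ 2), then S* contains all but at most one of the components T₁, …, T_r. -/

import Mathlib

/-- Two grid cells are adjacent iff they differ by 1 in exactly one coordinate. -/
def Adj (p q : ℤ × ℤ) : Prop :=
  (p.1 = q.1 ∧ (p.2 = q.2 + 1 ∨ q.2 = p.2 + 1)) ∨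
  (p.2 = q.2 ∧ (p.1 = q.1 + 1 ∨ q.1 = p.1 + 1))

/-- Reachability within a set of cells via grid adjacency. -/
def Reach (S : Set (ℤ × ℤ)) (p q : ℤ × ℤ) : Prop :=
  Relation.ReflTransGen (fun a b => Adj a b ∧ a ∈ S ∧ b ∈ S) p q

/-- A set of cells induces a connected subgraph of the grid adjacency graph. -/
def ConnIn (S : Set (ℤ × ℤ)) : Prop := ∀ p ∈ S, ∀ q ∈ S, Reach S p q

/-- The shadow (upward closure) of a set of cells. -/
def Sh (S : Set (ℤ × ℤ)) : Set (ℤ × ℤ) := {c | ∃ j' ≤ c.2, (c.1, j') ∈ S}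

theorem all_but_one_component (A B Sstar : Set (ℤ × ℤ)) (hfin : A.Finite)
    (hconnA : ConnIn A)
    (hsub : Sstar ⊆ A) (hne : Sstar.Nonempty) (hprop : Sstar ≠ A)
    (hSconn : ConnIn Sstar) (hScconn : ConnIn (A \ Sstar))
    (hvalid : ∀ i j j' : ℤ, (i, j) ∈ Sstar → (i, j') ∈ A → j < j' → (i, j') ∈ Sstar)
    (hB : B ⊆ Sstar)
    (r : ℕ) (hr : 2 ≤ r) (T : Fin r → Set (ℤ × ℤ))
    (hTunion : (⋃ i, T i) = A \ B)
    (hTne : ∀ i, (T i).Nonempty)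
    (hTdisj : ∀ i j, i ≠ j → Disjoint (T i) (T j))
    (hTconn : ∀ i, ConnIn (T i))
    (hTsep : ∀ i j, i ≠ j → ∀ p ∈ T i, ∀ q ∈ T j, ¬ Adj p q) :
    ∃ i₀ : Fin r, ∀ i, i ≠ i₀ → T i ⊆ Sstar := by
  -- A \ Sstar is nonempty
  obtain ⟨x, hxA, hxS⟩ : ∃ x, x ∈ A ∧ x ∉ Sstar := by
    by_contra h
    push_neg at h
    exact hprop (Set.Subset.antisymm hsub h)
  have hxAB : x ∈ A \ B := ⟨hxA, fun hxB => hxS (hB hxB)⟩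
  have hxU : x ∈ ⋃ i, T i := hTunion ▸ hxAB
  obtain ⟨i₀, hxT⟩ := Set.mem_iUnion.mp hxU
  refine ⟨i₀, fun i hi p hp => ?_⟩
  by_contra hpS
  have hpAB : p ∈ A \ B := hTunion ▸ Set.mem_iUnion.mpr ⟨i, hp⟩
  have hpAS : p ∈ A \ Sstar := ⟨hpAB.1, hpS⟩
  have hxAS : x ∈ A \ Sstar := ⟨hxA, hxS⟩
  have hreach : Reach (A \ B) p x := by
    have h := hScconn p hpAS x hxAS
    refine Relation.ReflTransGen.mono ?_ _ _ h
    rintro a b ⟨hab, ha, hb⟩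
    exact ⟨hab, ⟨ha.1, fun h => ha.2 (hB h)⟩, ⟨hb.1, fun h => hb.2 (hB h)⟩⟩
  -- reachability in A \ B preserves the component index
  have key : ∀ q, Reach (A \ B) p q → q ∈ T i := by
    intro q hq
    induction hq with
    | refl => exact hp
    | tail hab hstep ih =>
      rename_i b c
      obtain ⟨hadj, hbm, hcm⟩ := hstep
      have hcU : c ∈ ⋃ k, T k := hTunion ▸ hcm
      obtain ⟨k, hck⟩ := Set.mem_iUnion.mp hcU
      by_cases hk : k = i
      · exact hk ▸ hck
      · exact absurd hadj (hTsep i k (fun h => hk h.symm) b ih c hck)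
  have hxTi : x ∈ T i := key x hreach
  exact Set.notMem_empty x ((hTdisj i i₀ hi).inter_eq ▸ ⟨hxTi, hxT⟩)
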